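/- Let (θ_i)_{i≥1} be positive reals with ∑_{i≥1} θ_i = 1 and define the diagonal density w(x,y) := ∑_{i≥1} θ_i·1_{[i,i+1)}(x)·1_{[i,i+1)}(y) on ℝ², with marginals w_X(x) = ∑_i θ_i 1_{[i,i+1)}(x) and w_Y(y) = ∑_i θ_i 1_{[i,i+1)}(y). Let f = ∑_{i≥1} f_i·1_{[i,i+1)} be a step function with ∑_{i≥1} |f_i| θ_i < ∞ and ∑_{i≥1} f_i θ_i = 0, and set g := −f. Then f ∈ L^1(w_X), g ∈ L^1(w_Y), and the pair (f,g) solves the homogeneous linear system: f(x)·w_X(x) + ∫ g(y)·w(x,y)dy = 0 for a.e. x, g(y)·w_Y(y) + ∫ f(x)·w(x,y)dx = 0 for a.e. y, and ∫ g(y)·w_Y(y)dy = 0. In particular, choosing the f_i not all zero, the system (with zero marginal data) admits non-trivial solutions, so uniqueness fails for this density. -/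

import Mathlib

open MeasureTheory

noncomputable section

/-- The weighted measure `w(x,y)dxdy` on `ℝ²`. -/
def wMeasure2 (w : ℝ × ℝ → ℝ) : Measure (ℝ × ℝ) :=
  volume.withDensity (fun z => ENNReal.ofReal (w z))

/-- `w` is a strictly positive (probability) density on `ℝ²`. -/
def IsDensity2 (w : ℝ × ℝ → ℝ) : Prop :=
  Measurable w ∧ (∀ z, 0 < w z) ∧ (∫ z, w z) = 1

/-- The Smirnov property on `ℝ²` for exponent `q`: whenever `f(x)+g(y) ∈ L^q(w)` with
`f(x), g(y) ∈ L^1(w)`, then `f(x), g(y) ∈ L^q(w)`. -/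
def SmirnovProperty2 (w : ℝ × ℝ → ℝ) (q : ℝ) : Prop :=
  ∀ f g : ℝ → ℝ, Measurable f → Measurable g →
    MemLp (fun z : ℝ × ℝ => f z.1) 1 (wMeasure2 w) →
    MemLp (fun z : ℝ × ℝ => g z.2) 1 (wMeasure2 w) →
    MemLp (fun z : ℝ × ℝ => f z.1 + g z.2) (ENNReal.ofReal q) (wMeasure2 w) →
    MemLp (fun z : ℝ × ℝ => f z.1) (ENNReal.ofReal q) (wMeasure2 w) ∧
    MemLp (fun z : ℝ × ℝ => g z.2) (ENNReal.ofReal q) (wMeasure2 w)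

/-- The step function `∑_{i ≥ 1} c_i · 1_{[i, i+1)}`, with coefficients indexed so that
`c k` is the value on `[k+1, k+2)`. -/
def stepFun (c : ℕ → ℝ) (x : ℝ) : ℝ :=
  ∑' k : ℕ, c k * Set.indicator (Set.Ico ((k : ℝ) + 1) ((k : ℝ) + 2)) 1 x

/-- The diagonal density `∑_{i ≥ 1} θ_i · 1_{[i,i+1)}(x) · 1_{[i,i+1)}(y)`. -/
def diagDensity (θ : ℕ → ℝ) (z : ℝ × ℝ) : ℝ :=
  ∑' k : ℕ, θ k * Set.indicator (Set.Ico ((k : ℝ) + 1) ((k : ℝ) + 2)) 1 z.1 *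
    Set.indicator (Set.Ico ((k : ℝ) + 1) ((k : ℝ) + 2)) 1 z.2

namespace NonUniq
open Set

lemma one_le_cast (k : ℕ) : (1:ℝ) ≤ (k:ℝ) + 1 := by
  have : (0:ℝ) ≤ k := Nat.cast_nonneg k
  linarith

lemma mem_unique {j k : ℕ} {x : ℝ} (hj : x ∈ Set.Ico ((j:ℝ)+1) ((j:ℝ)+2))
    (hk : x ∈ Set.Ico ((k:ℝ)+1) ((k:ℝ)+2)) : j = k := by
  obtain ⟨hj1, hj2⟩ := hj; obtain ⟨hk1, hk2⟩ := hk
  have h1' : j < k + 1 := by exact_mod_cast (by push_cast; linarith : (j:ℝ) < ((k+1:ℕ):ℝ))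
  have h2' : k < j + 1 := by exact_mod_cast (by push_cast; linarith : (k:ℝ) < ((j+1:ℕ):ℝ))
  omega

lemma cases_x (x : ℝ) : x < 1 ∨ ∃ k : ℕ, x ∈ Set.Ico ((k:ℝ)+1) ((k:ℝ)+2) := by
  by_cases h : x < 1
  · exact Or.inl h
  · right
    push_neg at h
    have h1 : (1:ℤ) ≤ ⌊x⌋ := by exact_mod_cast Int.le_floor.2 (by exact_mod_cast h)
    have ht : ((⌊x⌋ - 1).toNat : ℤ) = ⌊x⌋ - 1 := Int.toNat_of_nonneg (by omega)
    have h2 : (((⌊x⌋ - 1).toNat : ℕ) : ℝ) = (⌊x⌋ : ℝ) - 1 := by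
      exact_mod_cast congrArg (fun n : ℤ => (n : ℝ)) ht
    refine ⟨(⌊x⌋ - 1).toNat, ?_, ?_⟩
    · rw [h2]; linarith [Int.floor_le x]
    · rw [h2]; linarith [Int.lt_floor_add_one x]

lemma stepFun_eq_on {c : ℕ → ℝ} {k : ℕ} {x : ℝ} (hx : x ∈ Set.Ico ((k:ℝ)+1) ((k:ℝ)+2)) :
    stepFun c x = c k := by
  unfold stepFun
  rw [tsum_eq_single k]
  · rw [Set.indicator_of_mem hx]; simp
  · intro j hjk
    rw [Set.indicator_of_notMem, mul_zero]
    intro hxj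
    exact hjk (mem_unique hxj hx)

lemma stepFun_of_lt {c : ℕ → ℝ} {x : ℝ} (hx : x < 1) : stepFun c x = 0 := by
  unfold stepFun
  have : ∀ k : ℕ, c k * Set.indicator (Set.Ico ((k:ℝ)+1) ((k:ℝ)+2)) 1 x = 0 := by
    intro k
    rw [Set.indicator_of_notMem, mul_zero]
    intro hxk
    have := le_trans (one_le_cast k) hxk.1
    linarith
  rw [tsum_congr this, tsum_zero]

lemma stepFun_eq_indicator (c : ℕ → ℝ) :
    stepFun c = Set.indicator (Set.Ici (1:ℝ)) (fun x => c (⌊x⌋ - 1).toNat) := by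
  funext x
  rcases cases_x x with h | ⟨k, hk⟩
  · rw [stepFun_of_lt h, Set.indicator_of_notMem (by simpa using h)]
  · rw [stepFun_eq_on hk, Set.indicator_of_mem (Set.mem_Ici.mpr (le_trans (one_le_cast k) hk.1))]
    have hfl : ⌊x⌋ = (k:ℤ) + 1 := by
      rw [Int.floor_eq_iff]
      constructor
      · exact_mod_cast hk.1
      · push_cast; linarith [hk.2]
    rw [hfl]
    norm_num

lemma measurable_stepFun (c : ℕ → ℝ) : Measurable (stepFun c) := by
  rw [stepFun_eq_indicator]
  exact Measurable.indicator
    ((measurable_from_top (f := fun n : ℤ => c (n - 1).toNat)).comp Int.measurable_floor)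
    measurableSet_Ici

lemma stepFun_nonneg {c : ℕ → ℝ} (hc : ∀ k, 0 ≤ c k) (x : ℝ) : 0 ≤ stepFun c x := by
  rcases cases_x x with h | ⟨k, hk⟩
  · rw [stepFun_of_lt h]
  · rw [stepFun_eq_on hk]; exact hc k

lemma stepFun_mul (a b : ℕ → ℝ) (x : ℝ) :
    stepFun a x * stepFun b x = stepFun (fun k => a k * b k) x := by
  rcases cases_x x with h | ⟨k, hk⟩
  · simp [stepFun_of_lt h]
  · rw [stepFun_eq_on hk, stepFun_eq_on hk, stepFun_eq_on hk]

lemma diag_fst {θ : ℕ → ℝ} {k : ℕ} {x : ℝ} (hx : x ∈ Set.Ico ((k:ℝ)+1) ((k:ℝ)+2)) (y : ℝ) :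
    diagDensity θ (x, y) = θ k * Set.indicator (Set.Ico ((k:ℝ)+1) ((k:ℝ)+2)) 1 y := by
  have hside : ∀ j : ℕ, j ≠ k →
      θ j * Set.indicator (Set.Ico ((j:ℝ)+1) ((j:ℝ)+2)) 1 ((x,y) : ℝ × ℝ).1 *
        Set.indicator (Set.Ico ((j:ℝ)+1) ((j:ℝ)+2)) 1 ((x,y) : ℝ × ℝ).2 = 0 := by
    intro j hjk
    have hn : x ∉ Set.Ico ((j:ℝ)+1) ((j:ℝ)+2) := fun hxj => hjk (mem_unique hxj hx)
    simp [Set.indicator_of_notMem hn]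
  unfold diagDensity
  rw [tsum_eq_single k hside]
  simp [Set.indicator_of_mem hx]

lemma diag_fst_lt {θ : ℕ → ℝ} {x : ℝ} (hx : x < 1) (y : ℝ) : diagDensity θ (x, y) = 0 := by
  unfold diagDensity
  have h : ∀ k : ℕ, θ k * Set.indicator (Set.Ico ((k:ℝ)+1) ((k:ℝ)+2)) 1 ((x,y) : ℝ × ℝ).1 *
      Set.indicator (Set.Ico ((k:ℝ)+1) ((k:ℝ)+2)) 1 ((x,y) : ℝ × ℝ).2 = 0 := by
    intro k
    have hnot : x ∉ Set.Ico ((k:ℝ)+1) ((k:ℝ)+2) := by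
      intro hxk
      have := le_trans (one_le_cast k) hxk.1
      linarith
    simp [Set.indicator_of_notMem hnot]
  rw [tsum_congr h, tsum_zero]

lemma diag_snd {θ : ℕ → ℝ} {k : ℕ} {y : ℝ} (hy : y ∈ Set.Ico ((k:ℝ)+1) ((k:ℝ)+2)) (x : ℝ) :
    diagDensity θ (x, y) = θ k * Set.indicator (Set.Ico ((k:ℝ)+1) ((k:ℝ)+2)) 1 x := by
  have hside : ∀ j : ℕ, j ≠ k →
      θ j * Set.indicator (Set.Ico ((j:ℝ)+1) ((j:ℝ)+2)) 1 ((x,y) : ℝ × ℝ).1 *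
        Set.indicator (Set.Ico ((j:ℝ)+1) ((j:ℝ)+2)) 1 ((x,y) : ℝ × ℝ).2 = 0 := by
    intro j hjk
    have hn : y ∉ Set.Ico ((j:ℝ)+1) ((j:ℝ)+2) := fun hyj => hjk (mem_unique hyj hy)
    simp [Set.indicator_of_notMem hn]
  unfold diagDensity
  rw [tsum_eq_single k hside]
  simp [Set.indicator_of_mem hy]

lemma diag_snd_lt {θ : ℕ → ℝ} {y : ℝ} (hy : y < 1) (x : ℝ) : diagDensity θ (x, y) = 0 := by
  unfold diagDensity
  have h : ∀ k : ℕ, θ k * Set.indicator (Set.Ico ((k:ℝ)+1) ((k:ℝ)+2)) 1 ((x,y) : ℝ × ℝ).1 *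
      Set.indicator (Set.Ico ((k:ℝ)+1) ((k:ℝ)+2)) 1 ((x,y) : ℝ × ℝ).2 = 0 := by
    intro k
    have hnot : y ∉ Set.Ico ((k:ℝ)+1) ((k:ℝ)+2) := by
      intro hyk
      have := le_trans (one_le_cast k) hyk.1
      linarith
    simp [Set.indicator_of_notMem hnot]
  rw [tsum_congr h, tsum_zero]

def U : Set ℝ := ⋃ k : ℕ, Set.Ico ((k:ℝ)+1) ((k:ℝ)+2)

lemma measurableSet_U : MeasurableSet U := MeasurableSet.iUnion fun _ => measurableSet_Ico

lemma disjoint_U : Pairwise (Function.onFun Disjoint (fun k : ℕ => Set.Ico ((k:ℝ)+1) ((k:ℝ)+2))) := by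
  intro j k hjk
  exact Set.disjoint_left.2 fun x hxj hxk => hjk (mem_unique hxj hxk)

lemma not_mem_U {x : ℝ} (hx : x ∉ U) : x < 1 := by
  rcases cases_x x with h | ⟨k, hk⟩
  · exact h
  · exact absurd (Set.mem_iUnion.2 ⟨k, hk⟩) hx

lemma volume_Ico_one (k : ℕ) : volume (Set.Ico ((k:ℝ)+1) ((k:ℝ)+2)) = 1 := by
  rw [Real.volume_Ico]
  norm_num

lemma stepFun_integrable (a : ℕ → ℝ) (ha : Summable (fun k => |a k|)) :
    Integrable (stepFun a) := by
  refine ⟨(measurable_stepFun a).aestronglyMeasurable, ?_⟩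
  unfold HasFiniteIntegral
  simp only [enorm_eq_nnnorm]
  rw [← lintegral_add_compl (fun x => (‖stepFun a x‖₊ : ENNReal)) measurableSet_U]
  have h2 : ∫⁻ x in Uᶜ, (‖stepFun a x‖₊ : ENNReal) = 0 := by
    have he : ∀ x ∈ Uᶜ, (fun x => (‖stepFun a x‖₊ : ENNReal)) x = (fun _ => (0:ENNReal)) x :=
      fun x hx => by simp [stepFun_of_lt (not_mem_U hx)]
    rw [setLIntegral_congr_fun_ae measurableSet_U.compl (Filter.Eventually.of_forall he)]
    simp
  rw [h2, add_zero]
  unfold U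
  rw [lintegral_iUnion (fun _ => measurableSet_Ico) disjoint_U]
  have h3 : ∀ k : ℕ, ∫⁻ x in Set.Ico ((k:ℝ)+1) ((k:ℝ)+2), (‖stepFun a x‖₊ : ENNReal)
      = (‖a k‖₊ : ENNReal) := by
    intro k
    have he : ∀ x ∈ Set.Ico ((k:ℝ)+1) ((k:ℝ)+2),
        (fun x => (‖stepFun a x‖₊ : ENNReal)) x = (fun _ => (‖a k‖₊ : ENNReal)) x :=
      fun x hx => by simp [stepFun_eq_on hx]
    rw [setLIntegral_congr_fun_ae measurableSet_Ico (Filter.Eventually.of_forall he),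
      setLIntegral_const, volume_Ico_one, mul_one]
  rw [tsum_congr h3]
  have hs : Summable (fun k => ‖a k‖₊) := by
    rw [← NNReal.summable_coe]
    simpa [Real.norm_eq_abs] using ha
  exact lt_top_iff_ne_top.2 (ENNReal.tsum_coe_ne_top_iff_summable.2 hs)

lemma stepFun_integral (a : ℕ → ℝ) (ha : Summable (fun k => |a k|)) :
    ∫ x, stepFun a x = ∑' k, a k := by
  rw [← setIntegral_eq_integral_of_forall_compl_eq_zero
    (fun x hx => stepFun_of_lt (not_mem_U hx)) (s := U)]
  unfold U
  rw [integral_iUnion (fun _ => measurableSet_Ico) disjoint_U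
    ((stepFun_integrable a ha).integrableOn)]
  refine tsum_congr fun k => ?_
  have he : Set.EqOn (stepFun a) (fun _ => a k) (Set.Ico ((k:ℝ)+1) ((k:ℝ)+2)) :=
    fun x hx => stepFun_eq_on hx
  rw [setIntegral_congr_fun measurableSet_Ico he, setIntegral_const, measureReal_def, volume_Ico_one]
  simp

end NonUniq

open NonUniq in
/-- non-uniqueness example: for the diagonal density built from `(θ_i)`,
any step function `f` with `∑|f_i|θ_i < ∞` and `∑ f_i θ_i = 0`, together with `g = -f`,
solves the homogeneous linear system with zero marginal data; choosing the `f_i` not all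
zero yields a non-trivial solution, so uniqueness fails. -/
theorem nonuniqueness_for_diagonal_density
    (θ : ℕ → ℝ) (hθpos : ∀ k, 0 < θ k) (hθsum : HasSum θ 1)
    (fc : ℕ → ℝ) (hfl1 : Summable (fun k => |fc k| * θ k))
    (hf0 : (∑' k, fc k * θ k) = 0) :
    MemLp (stepFun fc) 1
      (volume.withDensity (fun x => ENNReal.ofReal (stepFun θ x))) ∧
    MemLp (fun y => - stepFun fc y) 1
      (volume.withDensity (fun y => ENNReal.ofReal (stepFun θ y))) ∧
    (∀ᵐ x : ℝ, stepFun fc x * stepFun θ x +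
        (∫ y, (- stepFun fc y) * diagDensity θ (x, y)) = 0) ∧
    (∀ᵐ y : ℝ, (- stepFun fc y) * stepFun θ y +
        (∫ x, stepFun fc x * diagDensity θ (x, y)) = 0) ∧
    (∫ y, (- stepFun fc y) * stepFun θ y) = 0 ∧
    ((∃ k, fc k ≠ 0) →
      ¬ (∀ᵐ x ∂(volume.withDensity (fun x => ENNReal.ofReal (stepFun θ x))),
          stepFun fc x = 0)) := by
  have hθnn : ∀ k, 0 ≤ θ k := fun k => (hθpos k).le
  have hsumprod : Summable (fun k => |fc k * θ k|) := by
    have habs : ∀ k, |fc k * θ k| = |fc k| * θ k := fun k => by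
      rw [abs_mul, abs_of_pos (hθpos k)]
    simpa [habs] using hfl1
  have he : (fun x => stepFun fc x * stepFun θ x) = stepFun (fun k => fc k * θ k) :=
    funext fun x => stepFun_mul fc θ x
  have Hint : Integrable (fun x => stepFun fc x * stepFun θ x) := by
    rw [he]; exact stepFun_integrable _ hsumprod
  have hmeasθ : Measurable (fun x => ENNReal.ofReal (stepFun θ x)) :=
    (measurable_stepFun θ).ennreal_ofReal
  have hg1 : MemLp (stepFun fc) 1
      (volume.withDensity fun x => ENNReal.ofReal (stepFun θ x)) := by
    rw [memLp_one_iff_integrable,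
      integrable_withDensity_iff hmeasθ (Filter.Eventually.of_forall fun x => ENNReal.ofReal_lt_top)]
    have h2 : (fun x => stepFun fc x * (ENNReal.ofReal (stepFun θ x)).toReal) =
        fun x => stepFun fc x * stepFun θ x :=
      funext fun x => by rw [ENNReal.toReal_ofReal (stepFun_nonneg hθnn x)]
    rw [h2]; exact Hint
  refine ⟨hg1, hg1.neg, ?_, ?_, ?_, ?_⟩
  · refine Filter.Eventually.of_forall fun x => ?_
    rcases cases_x x with h | ⟨k, hk⟩
    · have h2 : (fun y => -stepFun fc y * diagDensity θ (x, y)) = fun _ => (0:ℝ) :=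
        funext fun y => by rw [diag_fst_lt h y, mul_zero]
      rw [stepFun_of_lt (c := θ) h, h2, mul_zero, integral_zero, add_zero]
    · have h2 : (fun y => -stepFun fc y * diagDensity θ (x, y)) =
          fun y => Set.indicator (Set.Ico ((k:ℝ)+1) ((k:ℝ)+2)) (fun _ => -(fc k * θ k)) y := by
        funext y
        by_cases hy : y ∈ Set.Ico ((k:ℝ)+1) ((k:ℝ)+2)
        · rw [diag_fst hk y, Set.indicator_of_mem hy, Set.indicator_of_mem hy,
            stepFun_eq_on hy]
          simp only [Pi.one_apply, mul_one]
          ring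
        · rw [diag_fst hk y, Set.indicator_of_notMem hy, Set.indicator_of_notMem hy,
            mul_zero, mul_zero]
      rw [stepFun_eq_on (c := fc) hk, stepFun_eq_on (c := θ) hk, h2,
        integral_indicator_const _ measurableSet_Ico, measureReal_def, volume_Ico_one]
      simp
  · refine Filter.Eventually.of_forall fun y => ?_
    rcases cases_x y with h | ⟨k, hk⟩
    · have h2 : (fun x => stepFun fc x * diagDensity θ (x, y)) = fun _ => (0:ℝ) :=
        funext fun x => by rw [diag_snd_lt h x, mul_zero]
      rw [stepFun_of_lt (c := θ) h, h2, mul_zero, integral_zero, add_zero]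
    · have h2 : (fun x => stepFun fc x * diagDensity θ (x, y)) =
          fun x => Set.indicator (Set.Ico ((k:ℝ)+1) ((k:ℝ)+2)) (fun _ => fc k * θ k) x := by
        funext x
        by_cases hx : x ∈ Set.Ico ((k:ℝ)+1) ((k:ℝ)+2)
        · rw [diag_snd hk x, Set.indicator_of_mem hx, Set.indicator_of_mem hx,
            stepFun_eq_on hx]
          simp only [Pi.one_apply, mul_one]
        · rw [diag_snd hk x, Set.indicator_of_notMem hx, Set.indicator_of_notMem hx,
            mul_zero, mul_zero]
      rw [stepFun_eq_on (c := fc) hk, stepFun_eq_on (c := θ) hk, h2,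
        integral_indicator_const _ measurableSet_Ico, measureReal_def, volume_Ico_one]
      simp [mul_comm]
  · have h2 : (fun y => -stepFun fc y * stepFun θ y) =
        fun y => -(stepFun (fun k => fc k * θ k) y) :=
      funext fun y => by rw [neg_mul, stepFun_mul]
    rw [h2, integral_neg, stepFun_integral _ hsumprod, hf0, neg_zero]
  · rintro ⟨k, hk⟩ hae
    rw [ae_iff] at hae
    have hsub : Set.Ico ((k:ℝ)+1) ((k:ℝ)+2) ⊆ {x | ¬ stepFun fc x = 0} := fun x hx => by
      simp only [Set.mem_setOf_eq, stepFun_eq_on hx]; exact hk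
    have hle := measure_mono (μ := volume.withDensity fun x => ENNReal.ofReal (stepFun θ x)) hsub
    rw [hae] at hle
    have hIco : (volume.withDensity fun x => ENNReal.ofReal (stepFun θ x))
        (Set.Ico ((k:ℝ)+1) ((k:ℝ)+2)) = ENNReal.ofReal (θ k) := by
      rw [withDensity_apply _ measurableSet_Ico]
      have hee : ∀ x ∈ Set.Ico ((k:ℝ)+1) ((k:ℝ)+2),
          (fun x => ENNReal.ofReal (stepFun θ x)) x = (fun _ => ENNReal.ofReal (θ k)) x :=
        fun x hx => by simp [stepFun_eq_on hx]
      rw [setLIntegral_congr_fun_ae measurableSet_Ico (Filter.Eventually.of_forall hee),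
        setLIntegral_const, volume_Ico_one, mul_one]
    rw [hIco] at hle
    have : θ k ≤ 0 := ENNReal.ofReal_eq_zero.mp (le_antisymm hle (by simp))
    linarith [hθpos k]
end
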